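/- On the cycle graph with n+1 vertices, every labeling that is not the all-ones labeling and (when n is odd) not an alternating labeling is equivalent to a labeling whose value at vertex 0 is 0. -/

import Mathlib

/-- Reeder's move `T_i`. -/
def move {V : Type} [Fintype V] [DecidableEq V] (D : SimpleGraph V) [DecidableRel D.Adj]
    (i : V) (a : V → ZMod 2) : V → ZMod 2 :=
  fun j => if j = i then a i + ∑ k ∈ D.neighborFinset i, a k else a j

/-- One step of Reeder's game: apply some move. -/
def reederStep {V : Type} [Fintype V] [DecidableEq V] (D : SimpleGraph V)
    [DecidableRel D.Adj] (a b : V → ZMod 2) : Prop :=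
  ∃ i, b = move D i a

/-- Equivalence of labelings: a finite sequence of moves. -/
def reederEquiv {V : Type} [Fintype V] [DecidableEq V] (D : SimpleGraph V)
    [DecidableRel D.Adj] : (V → ZMod 2) → (V → ZMod 2) → Prop :=
  Relation.ReflTransGen (reederStep D)

/-- The cycle graph on `n+1` vertices `0,…,n`. -/
def cycG (n : ℕ) : SimpleGraph (Fin (n + 1)) where
  Adj i j := i ≠ j ∧ ((i.val + 1) % (n + 1) = j.val ∨ (j.val + 1) % (n + 1) = i.val)
  symm := by constructor; intro i j h; exact ⟨Ne.symm h.1, h.2.symm⟩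
  loopless := by constructor; intro i h; exact h.1 rfl

instance (n : ℕ) : DecidableRel (cycG n).Adj :=
  fun i j => inferInstanceAs
    (Decidable (i ≠ j ∧ ((i.val + 1) % (n + 1) = j.val ∨ (j.val + 1) % (n + 1) = i.val)))

open Fin.CommRing

lemma myValAddOne {n : ℕ} (i : Fin (n+1)) : (i + 1).val = (i.val + 1) % (n+1) := by
  rw [Fin.add_def]
  simp [Fin.val_one]

lemma myValTwo {n : ℕ} (hn : 2 ≤ n) : ((2 : Fin (n+1))).val = 2 := by
  simpa using Fin.val_cast_of_lt (show (2:ℕ) < n + 1 by omega)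

lemma myOneNeZero {n : ℕ} (hn : 2 ≤ n) : (1 : Fin (n+1)) ≠ 0 := by
  intro h
  have h1 : ((1 : Fin (n+1))).val = 1 := by
    simpa using Fin.val_cast_of_lt (show (1:ℕ) < n + 1 by omega)
  rw [h] at h1
  simp at h1

lemma myTwoNeZero {n : ℕ} (hn : 2 ≤ n) : (2 : Fin (n+1)) ≠ 0 := by
  intro h
  have h2 : ((2 : Fin (n+1))).val = 0 := by rw [h]; rfl
  rw [myValTwo hn] at h2
  omega

lemma cyc_adj (n : ℕ) (hn : 2 ≤ n) (i j : Fin (n+1)) :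
    (cycG n).Adj i j ↔ (j = i + 1 ∨ j = i - 1) := by
  have hadd : ∀ x : Fin (n+1), (x + 1).val = (x.val + 1) % (n+1) := myValAddOne
  constructor
  · rintro ⟨hne, h | h⟩
    · left; apply Fin.ext; rw [hadd]; omega
    · right
      have : j = (j + 1) - 1 := by ring
      rw [this]
      congr 1
      apply Fin.ext; rw [hadd]; omega
  · rintro (rfl | rfl)
    · refine ⟨?_, Or.inl (by rw [hadd])⟩
      intro h
      exact myOneNeZero hn (by linear_combination -h)
    · refine ⟨?_, Or.inr ?_⟩
      · intro h
        exact myOneNeZero hn (by linear_combination h)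
      · rw [← hadd]
        congr 1
        ring

lemma cyc_sum (n : ℕ) (hn : 2 ≤ n) (i : Fin (n+1)) (a : Fin (n+1) → ZMod 2) :
    ∑ k ∈ (cycG n).neighborFinset i, a k = a (i + 1) + a (i - 1) := by
  have : (cycG n).neighborFinset i = {i + 1, i - 1} := by
    ext j
    simp [SimpleGraph.mem_neighborFinset, cyc_adj n hn]
  rw [this, Finset.sum_pair]
  intro h
  exact myTwoNeZero hn (by linear_combination h)

lemma zmodCases : ∀ x : ZMod 2, x = 0 ∨ x = 1 := by decide

lemma zmodNeSum : ∀ x y : ZMod 2, x ≠ y → x + y = 1 := by decide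

lemma zmodNeSucc : ∀ x : ZMod 2, x ≠ x + 1 := by decide

lemma key (n : ℕ) (hn : 2 ≤ n) :
    ∀ k : ℕ, ∀ a : Fin (n+1) → ZMod 2, ∀ i : Fin (n+1), i.val ≤ k →
      a (i - 1) ≠ a (i + 1) →
      ∃ b, reederEquiv (cycG n) a b ∧ b 0 = 0 := by
  intro k
  induction k with
  | zero =>
    intro a i hik hdef
    have hi0 : i = 0 := by
      apply Fin.ext
      simp only [Fin.val_zero]
      omega
    subst hi0
    rcases zmodCases (a 0) with h0 | h0
    · exact ⟨a, Relation.ReflTransGen.refl, h0⟩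
    · refine ⟨move (cycG n) 0 a, Relation.ReflTransGen.single ⟨0, rfl⟩, ?_⟩
      show (if (0 : Fin (n+1)) = 0 then a 0 + ∑ k ∈ (cycG n).neighborFinset 0, a k else a 0) = 0
      rw [if_pos rfl, cyc_sum n hn, h0, zmodNeSum _ _ (Ne.symm hdef)]
      decide
  | succ k ih =>
    intro a i hik hdef
    rcases Nat.lt_or_ge i.val (k + 1) with hlt | hge
    · exact ih a i (by omega) hdef
    · have hi0 : i ≠ 0 := by
        intro h; rw [h] at hge; simp at hge
      have hsub : (i - 1).val = i.val - 1 := by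
        rw [Fin.coe_sub_one, if_neg hi0]
      have hle : (i - 1).val ≤ k := by omega
      have heq1 : i - 1 + 1 = i := by ring
      by_cases h : a (i - 1 - 1) = a (i - 1 + 1)
      · -- move at i, creating a defect at i - 1
        set a' := move (cycG n) i a with ha'
        have hne2 : i - 1 - 1 ≠ i := by
          intro hh
          exact myTwoNeZero hn (by linear_combination -hh)
        have hne1 : i - 1 ≠ i := by
          intro hh
          exact myOneNeZero hn (by linear_combination -hh)
        have hv : ∀ j, j ≠ i → a' j = a j := by
          intro j hj
          show (if j = i then _ else a j) = a j
          rw [if_neg hj]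
        have hvi : a' i = a i + 1 := by
          show (if i = i then a i + ∑ k ∈ (cycG n).neighborFinset i, a k else a i) = a i + 1
          rw [if_pos rfl, cyc_sum n hn, zmodNeSum _ _ (Ne.symm hdef)]
        have hdef' : a' (i - 1 - 1) ≠ a' (i - 1 + 1) := by
          rw [heq1, hvi, hv _ hne2, h, heq1]
          exact zmodNeSucc _
        obtain ⟨b, hb, hb0⟩ := ih a' (i - 1) hle hdef'
        exact ⟨b, Relation.ReflTransGen.head ⟨i, rfl⟩ hb, hb0⟩
      · exact ih a (i - 1) hle h

/-- On the cycle with `n+1` vertices, every labeling that is not the all-ones labeling and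
(when `n` is odd) not one of the two alternating labelings is equivalent to a labeling
whose value at vertex 0 is 0. -/
theorem cycG_reduce_vertex_zero (n : ℕ) (hn : 2 ≤ n) (a : Fin (n + 1) → ZMod 2)
    (h1 : a ≠ fun _ => (1 : ZMod 2))
    (h2 : Odd n → a ≠ (fun v => if Even v.val then (1 : ZMod 2) else 0) ∧
      a ≠ (fun v => if Even v.val then (0 : ZMod 2) else 1)) :
    ∃ b : Fin (n + 1) → ZMod 2, reederEquiv (cycG n) a b ∧ b 0 = 0 := by
  rcases zmodCases (a 0) with h0 | h0
  · exact ⟨a, Relation.ReflTransGen.refl, h0⟩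
  by_cases hd : ∃ i : Fin (n+1), a (i - 1) ≠ a (i + 1)
  · obtain ⟨i, hi⟩ := hd
    exact key n hn i.val a i le_rfl hi
  · push_neg at hd
    exfalso
    have per : ∀ j : Fin (n+1), a (j + 2) = a j := by
      intro j
      have := hd (j + 1)
      rw [add_sub_cancel_right, show j + 1 + 1 = j + 2 by ring] at this
      exact this.symm
    have add2 : ∀ (m : ℕ) (hm : m + 2 ≤ n), (⟨m, by omega⟩ : Fin (n+1)) + 2 = ⟨m + 2, by omega⟩ := by
      intro m hm
      apply Fin.ext
      rw [Fin.add_def]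
      simp only [myValTwo hn]
      exact Nat.mod_eq_of_lt (by omega)
    have formula : ∀ k : ℕ, ∀ hk : k ≤ n, a ⟨k, by omega⟩ = if Even k then a 0 else a 1 := by
      intro k
      induction k using Nat.strong_induction_on with
      | _ k ih =>
        match k with
        | 0 => intro _; simp
        | 1 =>
          intro _
          have h1v : (⟨1, by omega⟩ : Fin (n+1)) = 1 := by
            apply Fin.ext
            simp only [Fin.val_one]
            exact (Nat.mod_eq_of_lt (by omega)).symm
          rw [h1v]
          simp [Nat.not_even_one]
        | (m+2) =>
          intro hk
          have hper := per ⟨m, by omega⟩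
          rw [add2 m hk] at hper
          rw [hper, ih m (by omega) (by omega)]
          congr 1
          simp [Nat.even_add_one, Nat.even_add, parity_simps]
    rcases zmodCases (a 1) with ha1 | ha1
    · -- a alternating with a 0 = 1, a 1 = 0 : need n odd, then contradict h2
      rcases Nat.even_or_odd n with he | ho
      · have hodd : Odd (n - 1) := Nat.Even.sub_odd (by omega) he (by decide)
        have hper := per ⟨n - 1, by omega⟩
        have hz : (⟨n - 1, by omega⟩ : Fin (n+1)) + 2 = 0 := by
          apply Fin.ext
          rw [Fin.add_def]
          simp only [myValTwo hn]
          have : n - 1 + 2 = n + 1 := by omega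
          rw [this, Nat.mod_self]
          rfl
        rw [hz] at hper
        have := formula (n - 1) (by omega)
        rw [if_neg (Nat.not_even_iff_odd.mpr hodd)] at this
        rw [hper, this, ha1] at h0
        exact absurd h0 (by decide)
      · refine (h2 ho).1 ?_
        funext v
        have := formula v.val (by omega)
        have hv : (⟨v.val, by omega⟩ : Fin (n+1)) = v := rfl
        rw [hv] at this
        rw [this, h0, ha1]
    · -- a constant 1
      refine h1 ?_
      funext v
      have := formula v.val (by omega)
      have hv : (⟨v.val, by omega⟩ : Fin (n+1)) = v := rfl
      rw [hv] at this
      rw [this, h0, ha1]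
      split <;> rfl
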